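/- Let θ > 0 and T ≥ 0, and let X be a random variable with the Poisson distribution of mean λ = θT. Then the variance of the Girsanov sensitivity estimator s = (1/θ)·X·(X − θT) is Var(s) = (T + 4θT² + θ²T³)/θ; equivalently, E[(X(X − θT)/θ − T)²] = (T + 4θT² + θ²T³)/θ. -/

import Mathlib

open MeasureTheory ProbabilityTheory

lemma descFactorial_hasSum (x : ℝ) (k : ℕ) :
    HasSum (fun n : ℕ => x ^ n / n.factorial * (n.descFactorial k : ℝ))
      (x ^ k * Real.exp x) := by
  have key : ∀ m : ℕ, x ^ (m + k) / (m + k).factorial * ((m + k).descFactorial k : ℝ)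
      = x ^ k * (x ^ m / m.factorial) := by
    intro m
    have h1 : (m.factorial : ℝ) * ((m + k).descFactorial k : ℝ) = ((m + k).factorial : ℝ) := by
      rw [← Nat.cast_mul]
      norm_cast
      have := Nat.factorial_mul_descFactorial (Nat.le_add_left k m)
      simpa using this
    have h2 : ((m + k).descFactorial k : ℝ) ≠ 0 := by
      intro h
      rw [h, mul_zero] at h1
      exact (Nat.cast_ne_zero.mpr (m + k).factorial_ne_zero) h1.symm
    rw [← h1]
    field_simp
    ring
  have h := NormedSpace.expSeries_div_hasSum_exp x
  rw [← Real.exp_eq_exp_ℝ] at h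
  have h2 : HasSum (fun m : ℕ => x ^ (m + k) / (m + k).factorial
      * ((m + k).descFactorial k : ℝ)) (x ^ k * Real.exp x) := by
    simp_rw [key]
    exact h.mul_left _
  have h3 := (hasSum_nat_add_iff
    (f := fun n : ℕ => x ^ n / n.factorial * (n.descFactorial k : ℝ)) k).mp h2
  have hz : ∑ n ∈ Finset.range k, x ^ n / (n.factorial : ℝ) * (n.descFactorial k : ℝ) = 0 :=
    Finset.sum_eq_zero fun i hi => by
      rw [Nat.descFactorial_of_lt (Finset.mem_range.mp hi)]; simp
  rw [hz, add_zero] at h3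
  exact h3

lemma cast_d2 (n : ℕ) : (n.descFactorial 2 : ℝ) = n * (n - 1) :=
  Nat.cast_descFactorial_two ℝ n

lemma cast_d3 (n : ℕ) : (n.descFactorial 3 : ℝ) = n * (n - 1) * (n - 2) := by
  rcases n with _ | _ | _ | m
  · norm_num [Nat.descFactorial]
  · norm_num [Nat.descFactorial]
  · norm_num [Nat.descFactorial]
  · simp only [Nat.descFactorial_succ, Nat.descFactorial_zero]
    push_cast
    ring

lemma cast_d4 (n : ℕ) : (n.descFactorial 4 : ℝ) = n * (n - 1) * (n - 2) * (n - 3) := by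
  rcases n with _ | _ | _ | _ | m
  · norm_num [Nat.descFactorial]
  · norm_num [Nat.descFactorial]
  · norm_num [Nat.descFactorial]
  · norm_num [Nat.descFactorial]
  · simp only [Nat.descFactorial_succ, Nat.descFactorial_zero]
    push_cast
    ring

lemma poisson_poly_hasSum (θ T : ℝ) (hθ : θ ≠ 0) :
    HasSum (fun n : ℕ => (θ * T) ^ n / n.factorial *
        (((n : ℝ) * ((n : ℝ) - θ * T) / θ - T) ^ 2))
      (Real.exp (θ * T) * ((T + 4 * θ * T ^ 2 + θ ^ 2 * T ^ 3) / θ)) := by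
  set x := θ * T with hx
  have H := (((((descFactorial_hasSum x 4).mul_left (1/θ^2)).add
      ((descFactorial_hasSum x 3).mul_left (-2*T/θ + 6/θ^2))).add
      ((descFactorial_hasSum x 2).mul_left (T^2 - 8*T/θ + 7/θ^2))).add
      ((descFactorial_hasSum x 1).mul_left (3*T^2 - 4*T/θ + 1/θ^2))).add
      ((descFactorial_hasSum x 0).mul_left (T^2))
  convert H using 1
  · rfl
  · funext n
    simp only [cast_d4, cast_d3, cast_d2, Nat.descFactorial_one, Nat.descFactorial_zero,
      Nat.cast_one, pow_zero, hx]
    have hf : (n.factorial : ℝ) ≠ 0 := Nat.cast_ne_zero.mpr n.factorial_ne_zero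
    field_simp
    ring
  · simp only [pow_zero, hx]
    field_simp
    ring

/-- For `X ~ Poisson(θT)` with `θ > 0`, `T ≥ 0`, the variance of the Girsanov
estimator `s = (1/θ)·X·(X − θT)` equals `(T + 4θT² + θ²T³)/θ`; since the
estimator has mean `T`, this is `E[(X(X − θT)/θ − T)²] = (T + 4θT² + θ²T³)/θ`. -/
theorem girsanov_estimator_variance (θ T : ℝ) (hθ : 0 < θ) (hT : 0 ≤ T) :
    ∫ n : ℕ, ((n : ℝ) * ((n : ℝ) - θ * T) / θ - T) ^ 2
      ∂(poissonMeasure (θ * T).toNNReal)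
      = (T + 4 * θ * T ^ 2 + θ ^ 2 * T ^ 3) / θ := by
  have hθ' : θ ≠ 0 := ne_of_gt hθ
  have hxnn : 0 ≤ θ * T := mul_nonneg hθ.le hT
  set r : NNReal := (θ * T).toNNReal with hr
  have hrc : (r : ℝ) = θ * T := Real.coe_toNNReal _ hxnn
  set f : ℕ → ℝ := fun n => ((n : ℝ) * ((n : ℝ) - θ * T) / θ - T) ^ 2 with hf
  have hfnn : ∀ n, 0 ≤ f n := fun n => sq_nonneg _
  have hS := poisson_poly_hasSum θ T hθ'
  -- the weighted summand
  have hpt : ∀ n, poissonPMFReal r n * f n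
      = Real.exp (-(θ * T)) * ((θ * T) ^ n / n.factorial * f n) := by
    intro n
    simp only [poissonPMFReal, hrc]
    ring
  have hsum : Summable (fun n => poissonPMFReal r n * f n) := by
    simp_rw [hpt]
    exact (hS.summable).mul_left _
  have hInt : Integrable f (poissonMeasure r) := by
    constructor
    · exact (measurable_from_nat).aestronglyMeasurable
    · rw [hasFiniteIntegral_iff_ofReal (Filter.Eventually.of_forall hfnn)]
      rw [lintegral_countable']
      have heq : ∀ n : ℕ, ENNReal.ofReal (f n) * (poissonMeasure r) {n}
          = ENNReal.ofReal (poissonPMFReal r n * f n) := by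
        intro n
        rw [show (poissonMeasure r) {n} = ENNReal.ofReal (poissonPMFReal r n) from
          poissonMeasure_singleton r n]
        rw [← ENNReal.ofReal_mul (hfnn n), mul_comm]
      simp_rw [heq]
      rw [← ENNReal.ofReal_tsum_of_nonneg
        (fun n => mul_nonneg poissonPMFReal_nonneg (hfnn n)) hsum]
      exact ENNReal.ofReal_lt_top
  rw [integral_poissonMeasure' hInt]
  have htr : ∀ n : ℕ, (Real.exp (-(r : ℝ)) * (r : ℝ) ^ n / (n.factorial : ℝ)) • f n
      = poissonPMFReal r n * f n := by
    intro n
    rw [smul_eq_mul]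
    rfl
  simp_rw [htr, hpt]
  rw [(hS.mul_left (Real.exp (-(θ * T)))).tsum_eq]
  rw [← mul_assoc, ← Real.exp_add]
  simp
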